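/- There exist finite subsets S₁ ≠ S₂ of the unit sphere in ℝ³ (e.g., the 6 octahedral bonds and the 8 cube-diagonal bonds) whose point groups are equal as subgroups of O(3), but whose extracopularity coefficients differ; hence E distinguishes geometries that point group order cannot. -/

import Mathlib

open scoped RealInnerProductSpace

noncomputable def v3 (a b c : ℝ) : EuclideanSpace ℝ (Fin 3) := (WithLp.equiv 2 _).symm ![a, b, c]

/-- The octahedral geometry: bonds `±e₁, ±e₂, ±e₃`. -/
noncomputable def octS : Set (EuclideanSpace ℝ (Fin 3)) :=
  {v3 1 0 0, v3 (-1) 0 0, v3 0 1 0, v3 0 (-1) 0, v3 0 0 1, v3 0 0 (-1)}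

/-- A normalized cube-diagonal bond `(a,b,c)/√3`. -/
noncomputable def cubev (a b c : ℝ) : EuclideanSpace ℝ (Fin 3) := (Real.sqrt 3)⁻¹ • v3 a b c

/-- The cubic geometry: the 8 normalized cube diagonals `(±1,±1,±1)/√3`. -/
noncomputable def cubeS : Set (EuclideanSpace ℝ (Fin 3)) :=
  {cubev 1 1 1, cubev 1 1 (-1), cubev 1 (-1) 1, cubev 1 (-1) (-1),
   cubev (-1) 1 1, cubev (-1) 1 (-1), cubev (-1) (-1) 1, cubev (-1) (-1) (-1)}

/-- Set of bond angles of a coordination geometry. -/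
def angleSet (S : Set (EuclideanSpace ℝ (Fin 3))) : Set ℝ :=
  {θ | ∃ b ∈ S, ∃ b' ∈ S, b ≠ b' ∧ θ = Real.arccos ⟪b, b'⟫}

/-- The point group of a geometry: all linear isometries of ℝ³ preserving it. -/
def pointGroup (S : Set (EuclideanSpace ℝ (Fin 3))) :
    Set (EuclideanSpace ℝ (Fin 3) ≃ₗᵢ[ℝ] EuclideanSpace ℝ (Fin 3)) :=
  {μ | μ '' S = S}

/-- Extracopularity coefficient `E(S) = log₂(C(k,2)/m)`. -/
noncomputable def Ecoeff (S : Set (EuclideanSpace ℝ (Fin 3))) : ℝ :=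
  Real.logb 2 (Nat.choose S.ncard 2) - Real.logb 2 ((angleSet S).ncard)

lemma v3_apply (a b c : ℝ) (i : Fin 3) : v3 a b c i = ![a,b,c] i := rfl

lemma v3_eq_iff {a b c d e f : ℝ} : v3 a b c = v3 d e f ↔ a = d ∧ b = e ∧ c = f := by
  constructor
  · intro h
    have h' : (![a,b,c] : Fin 3 → ℝ) = ![d,e,f] := congrArg (WithLp.equiv 2 (Fin 3 → ℝ)) h
    exact ⟨congrFun h' 0, congrFun h' 1, congrFun h' 2⟩
  · rintro ⟨rfl, rfl, rfl⟩; rfl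

lemma smul_v3 (s a b c : ℝ) : s • v3 a b c = v3 (s*a) (s*b) (s*c) := by
  unfold v3
  ext i
  fin_cases i <;> simp [v3]

lemma add_v3 (a b c d e f : ℝ) : v3 a b c + v3 d e f = v3 (a+d) (b+e) (c+f) := by
  unfold v3; ext i; fin_cases i <;> simp

lemma sub_v3 (a b c d e f : ℝ) : v3 a b c - v3 d e f = v3 (a-d) (b-e) (c-f) := by
  unfold v3; ext i; fin_cases i <;> simp

lemma neg_v3 (a b c : ℝ) : -v3 a b c = v3 (-a) (-b) (-c) := by
  unfold v3; ext i; fin_cases i <;> simp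

lemma inner_v3 (a b c d e f : ℝ) : ⟪v3 a b c, v3 d e f⟫ = a*d + b*e + c*f := by
  simp [v3, PiLp.inner_apply, Fin.sum_univ_three]
  ring




lemma sqrt3_pos : (0:ℝ) < Real.sqrt 3 := Real.sqrt_pos.2 (by norm_num)
lemma sqrt3_ne : (Real.sqrt 3) ≠ 0 := ne_of_gt sqrt3_pos

lemma inner_cubev (a b c d e f : ℝ) :
    ⟪cubev a b c, cubev d e f⟫ = (a*d + b*e + c*f)/3 := by
  unfold cubev
  rw [real_inner_smul_left, real_inner_smul_right, inner_v3]
  have : (Real.sqrt 3)⁻¹ * ((Real.sqrt 3)⁻¹ * (a*d + b*e + c*f)) =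
      ((Real.sqrt 3)*(Real.sqrt 3))⁻¹ * (a*d+b*e+c*f) := by
    rw [mul_inv]; ring
  rw [this, Real.mul_self_sqrt (by norm_num)]
  ring

lemma cube_sub (a b c d e f : ℝ) :
    (Real.sqrt 3 / 2) • (cubev a b c - cubev d e f) =
      v3 ((a-d)/2) ((b-e)/2) ((c-f)/2) := by
  unfold cubev
  rw [← smul_sub, smul_smul, sub_v3, div_mul_eq_mul_div, mul_inv_cancel₀ sqrt3_ne, smul_v3]
  rw [v3_eq_iff]
  refine ⟨by ring, by ring, by ring⟩

lemma cubev_eq_v3 (a b c : ℝ) :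
    cubev a b c = v3 ((Real.sqrt 3)⁻¹*a) ((Real.sqrt 3)⁻¹*b) ((Real.sqrt 3)⁻¹*c) := by
  unfold cubev; rw [smul_v3]

lemma octS_neg {v : EuclideanSpace ℝ (Fin 3)} (h : v ∈ octS) : -v ∈ octS := by
  simp only [octS, Set.mem_insert_iff, Set.mem_singleton_iff] at h ⊢
  rcases h with rfl|rfl|rfl|rfl|rfl|rfl <;> rw [neg_v3] <;> norm_num

lemma pair_oct (u w : EuclideanSpace ℝ (Fin 3)) (hu : u ∈ cubeS) (hw : w ∈ cubeS)
    (h : ⟪u,w⟫ = 1/3) : (Real.sqrt 3 / 2) • (u - w) ∈ octS := by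
  simp only [cubeS, Set.mem_insert_iff, Set.mem_singleton_iff] at hu hw
  rcases hu with rfl|rfl|rfl|rfl|rfl|rfl|rfl|rfl <;>
    rcases hw with rfl|rfl|rfl|rfl|rfl|rfl|rfl|rfl <;>
    rw [inner_cubev] at h <;>
    first
      | (exfalso; norm_num at h; done)
      | (rw [cube_sub]
         simp only [octS, Set.mem_insert_iff, Set.mem_singleton_iff, v3_eq_iff]
         norm_num)

lemma cube_mem (a b c : ℝ) (ha : a = 1 ∨ a = -1) (hb : b = 1 ∨ b = -1)
    (hc : c = 1 ∨ c = -1) : cubev a b c ∈ cubeS := by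
  rcases ha with rfl|rfl <;> rcases hb with rfl|rfl <;> rcases hc with rfl|rfl <;>
    simp [cubeS]

lemma cubev_decomp (a b c : ℝ) :
    cubev a b c = (Real.sqrt 3)⁻¹ • (a • v3 1 0 0 + b • v3 0 1 0 + c • v3 0 0 1) := by
  unfold cubev
  simp only [smul_v3, add_v3]
  norm_num

lemma triple_cube (x y z : EuclideanSpace ℝ (Fin 3))
    (hx : x ∈ octS) (hy : y ∈ octS) (hz : z ∈ octS)
    (hxy : ⟪x,y⟫ = 0) (hxz : ⟪x,z⟫ = 0) (hyz : ⟪y,z⟫ = 0)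
    (a b c : ℝ) (ha : a = 1 ∨ a = -1) (hb : b = 1 ∨ b = -1) (hc : c = 1 ∨ c = -1) :
    (Real.sqrt 3)⁻¹ • (a • x + b • y + c • z) ∈ cubeS := by
  simp only [octS, Set.mem_insert_iff, Set.mem_singleton_iff] at hx hy hz
  have hneg : ∀ t : ℝ, t = 1 ∨ t = -1 → -t = 1 ∨ -t = -1 := by
    rintro t (rfl|rfl) <;> norm_num
  rcases hx with rfl|rfl|rfl|rfl|rfl|rfl <;>
    rcases hy with rfl|rfl|rfl|rfl|rfl|rfl <;>
    first
      | (exfalso; rw [inner_v3] at hxy; norm_num at hxy; done)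
      | (rcases hz with rfl|rfl|rfl|rfl|rfl|rfl <;>
          first
            | (exfalso; rw [inner_v3] at hxz; norm_num at hxz; done)
            | (exfalso; rw [inner_v3] at hyz; norm_num at hyz; done)
            | (rw [smul_v3, smul_v3, smul_v3, add_v3, add_v3]
               norm_num
               rw [show (Real.sqrt 3)⁻¹ • _ = cubev _ _ _ from rfl]
               first
                 | exact cube_mem _ _ _ ha hb hc
                 | exact cube_mem _ _ _ ha hb (hneg _ hc)
                 | exact cube_mem _ _ _ ha (hneg _ hb) hc
                 | exact cube_mem _ _ _ ha (hneg _ hb) (hneg _ hc)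
                 | exact cube_mem _ _ _ (hneg _ ha) hb hc
                 | exact cube_mem _ _ _ (hneg _ ha) hb (hneg _ hc)
                 | exact cube_mem _ _ _ (hneg _ ha) (hneg _ hb) hc
                 | exact cube_mem _ _ _ (hneg _ ha) (hneg _ hb) (hneg _ hc)
                 | exact cube_mem _ _ _ hb ha hc
                 | exact cube_mem _ _ _ hb ha (hneg _ hc)
                 | exact cube_mem _ _ _ hb (hneg _ ha) hc
                 | exact cube_mem _ _ _ hb (hneg _ ha) (hneg _ hc)
                 | exact cube_mem _ _ _ (hneg _ hb) ha hc
                 | exact cube_mem _ _ _ (hneg _ hb) ha (hneg _ hc)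
                 | exact cube_mem _ _ _ (hneg _ hb) (hneg _ ha) hc
                 | exact cube_mem _ _ _ (hneg _ hb) (hneg _ ha) (hneg _ hc)
                 | exact cube_mem _ _ _ hb hc ha
                 | exact cube_mem _ _ _ hb hc (hneg _ ha)
                 | exact cube_mem _ _ _ hb (hneg _ hc) ha
                 | exact cube_mem _ _ _ hb (hneg _ hc) (hneg _ ha)
                 | exact cube_mem _ _ _ (hneg _ hb) hc ha
                 | exact cube_mem _ _ _ (hneg _ hb) hc (hneg _ ha)
                 | exact cube_mem _ _ _ (hneg _ hb) (hneg _ hc) ha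
                 | exact cube_mem _ _ _ (hneg _ hb) (hneg _ hc) (hneg _ ha)
                 | exact cube_mem _ _ _ ha hc hb
                 | exact cube_mem _ _ _ ha hc (hneg _ hb)
                 | exact cube_mem _ _ _ ha (hneg _ hc) hb
                 | exact cube_mem _ _ _ ha (hneg _ hc) (hneg _ hb)
                 | exact cube_mem _ _ _ (hneg _ ha) hc hb
                 | exact cube_mem _ _ _ (hneg _ ha) hc (hneg _ hb)
                 | exact cube_mem _ _ _ (hneg _ ha) (hneg _ hc) hb
                 | exact cube_mem _ _ _ (hneg _ ha) (hneg _ hc) (hneg _ hb)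
                 | exact cube_mem _ _ _ hc ha hb
                 | exact cube_mem _ _ _ hc ha (hneg _ hb)
                 | exact cube_mem _ _ _ hc (hneg _ ha) hb
                 | exact cube_mem _ _ _ hc (hneg _ ha) (hneg _ hb)
                 | exact cube_mem _ _ _ (hneg _ hc) ha hb
                 | exact cube_mem _ _ _ (hneg _ hc) ha (hneg _ hb)
                 | exact cube_mem _ _ _ (hneg _ hc) (hneg _ ha) hb
                 | exact cube_mem _ _ _ (hneg _ hc) (hneg _ ha) (hneg _ hb)
                 | exact cube_mem _ _ _ hc hb ha
                 | exact cube_mem _ _ _ hc hb (hneg _ ha)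
                 | exact cube_mem _ _ _ hc (hneg _ hb) ha
                 | exact cube_mem _ _ _ hc (hneg _ hb) (hneg _ ha)
                 | exact cube_mem _ _ _ (hneg _ hc) hb ha
                 | exact cube_mem _ _ _ (hneg _ hc) hb (hneg _ ha)
                 | exact cube_mem _ _ _ (hneg _ hc) (hneg _ hb) ha
                 | exact cube_mem _ _ _ (hneg _ hc) (hneg _ hb) (hneg _ ha)))

lemma O2C (μ : EuclideanSpace ℝ (Fin 3) ≃ₗᵢ[ℝ] EuclideanSpace ℝ (Fin 3))
    (h : μ '' octS ⊆ octS) : μ '' cubeS ⊆ cubeS := by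
  have h1 : μ (v3 1 0 0) ∈ octS := h ⟨_, by simp [octS], rfl⟩
  have h2 : μ (v3 0 1 0) ∈ octS := h ⟨_, by simp [octS], rfl⟩
  have h3 : μ (v3 0 0 1) ∈ octS := h ⟨_, by simp [octS], rfl⟩
  have o12 : ⟪μ (v3 1 0 0), μ (v3 0 1 0)⟫ = 0 := by
    rw [LinearIsometryEquiv.inner_map_map, inner_v3]; norm_num
  have o13 : ⟪μ (v3 1 0 0), μ (v3 0 0 1)⟫ = 0 := by
    rw [LinearIsometryEquiv.inner_map_map, inner_v3]; norm_num
  have o23 : ⟪μ (v3 0 1 0), μ (v3 0 0 1)⟫ = 0 := by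
    rw [LinearIsometryEquiv.inner_map_map, inner_v3]; norm_num
  rintro v ⟨u, hu, rfl⟩
  simp only [cubeS, Set.mem_insert_iff, Set.mem_singleton_iff] at hu
  rcases hu with rfl|rfl|rfl|rfl|rfl|rfl|rfl|rfl <;>
    · rw [cubev_decomp, map_smul, map_add, map_add, map_smul, map_smul, map_smul]
      exact triple_cube _ _ _ h1 h2 h3 o12 o13 o23 _ _ _ (by norm_num) (by norm_num)
        (by norm_num)

lemma C2O (μ : EuclideanSpace ℝ (Fin 3) ≃ₗᵢ[ℝ] EuclideanSpace ℝ (Fin 3))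
    (h : μ '' cubeS ⊆ cubeS) : μ '' octS ⊆ octS := by
  have m111 : μ (cubev 1 1 1) ∈ cubeS := h ⟨_, by simp [cubeS], rfl⟩
  have mn11 : μ (cubev (-1) 1 1) ∈ cubeS := h ⟨_, by simp [cubeS], rfl⟩
  have m1n1 : μ (cubev 1 (-1) 1) ∈ cubeS := h ⟨_, by simp [cubeS], rfl⟩
  have m11n : μ (cubev 1 1 (-1)) ∈ cubeS := h ⟨_, by simp [cubeS], rfl⟩
  have h1 : μ (v3 1 0 0) ∈ octS := by
    have e : v3 1 0 0 = (Real.sqrt 3 / 2) • (cubev 1 1 1 - cubev (-1) 1 1) := by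
      rw [cube_sub]; norm_num
    rw [e, map_smul, map_sub]
    exact pair_oct _ _ m111 mn11
      (by rw [LinearIsometryEquiv.inner_map_map, inner_cubev]; norm_num)
  have h2 : μ (v3 0 1 0) ∈ octS := by
    have e : v3 0 1 0 = (Real.sqrt 3 / 2) • (cubev 1 1 1 - cubev 1 (-1) 1) := by
      rw [cube_sub]; norm_num
    rw [e, map_smul, map_sub]
    exact pair_oct _ _ m111 m1n1
      (by rw [LinearIsometryEquiv.inner_map_map, inner_cubev]; norm_num)
  have h3 : μ (v3 0 0 1) ∈ octS := by
    have e : v3 0 0 1 = (Real.sqrt 3 / 2) • (cubev 1 1 1 - cubev 1 1 (-1)) := by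
      rw [cube_sub]; norm_num
    rw [e, map_smul, map_sub]
    exact pair_oct _ _ m111 m11n
      (by rw [LinearIsometryEquiv.inner_map_map, inner_cubev]; norm_num)
  rintro v ⟨u, hu, rfl⟩
  simp only [octS, Set.mem_insert_iff, Set.mem_singleton_iff] at hu
  rcases hu with rfl|rfl|rfl|rfl|rfl|rfl
  · exact h1
  · rw [show v3 (-1) 0 0 = -(v3 1 0 0) by rw [neg_v3]; norm_num, map_neg]
    exact octS_neg h1
  · exact h2
  · rw [show v3 0 (-1) 0 = -(v3 0 1 0) by rw [neg_v3]; norm_num, map_neg]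
    exact octS_neg h2
  · exact h3
  · rw [show v3 0 0 (-1) = -(v3 0 0 1) by rw [neg_v3]; norm_num, map_neg]
    exact octS_neg h3


lemma pg_eq : pointGroup octS = pointGroup cubeS := by
  have key : ∀ (A B : Set (EuclideanSpace ℝ (Fin 3))),
      (∀ μ : EuclideanSpace ℝ (Fin 3) ≃ₗᵢ[ℝ] EuclideanSpace ℝ (Fin 3),
        μ '' A ⊆ A → μ '' B ⊆ B) →
      ∀ μ : EuclideanSpace ℝ (Fin 3) ≃ₗᵢ[ℝ] EuclideanSpace ℝ (Fin 3),
        μ '' A = A → μ '' B = B := by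
    intro A B hAB μ hμ
    refine subset_antisymm (hAB μ hμ.le) ?_
    have hsymm : μ.symm '' A = A := by
      conv_lhs => rw [← hμ]
      rw [← Set.image_comp]
      simp
    have := hAB μ.symm hsymm.le
    intro x hx
    exact ⟨μ.symm x, this ⟨x, hx, rfl⟩, by simp⟩
  ext μ
  exact ⟨fun hμ => key octS cubeS O2C μ hμ, fun hμ => key cubeS octS C2O μ hμ⟩


lemma cubev_eq_iff {a b c d e f : ℝ} : cubev a b c = cubev d e f ↔ a = d ∧ b = e ∧ c = f := by
  rw [cubev_eq_v3, cubev_eq_v3, v3_eq_iff]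
  have h3 := sqrt3_ne
  constructor
  · rintro ⟨h1, h2, h3'⟩
    refine ⟨?_, ?_, ?_⟩ <;>
      [exact mul_left_cancel₀ (inv_ne_zero h3) h1;
       exact mul_left_cancel₀ (inv_ne_zero h3) h2;
       exact mul_left_cancel₀ (inv_ne_zero h3) h3']
  · rintro ⟨rfl, rfl, rfl⟩; exact ⟨rfl, rfl, rfl⟩

lemma angle_oct : angleSet octS = {Real.pi/2, Real.pi} := by
  ext θ
  constructor
  · rintro ⟨b, hb, b', hb', hne, rfl⟩
    simp only [octS, Set.mem_insert_iff, Set.mem_singleton_iff] at hb hb'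
    simp only [Set.mem_insert_iff, Set.mem_singleton_iff]
    rcases hb with rfl|rfl|rfl|rfl|rfl|rfl <;>
      rcases hb' with rfl|rfl|rfl|rfl|rfl|rfl <;>
      first
        | (exact absurd rfl hne)
        | (rw [inner_v3]; norm_num [Real.arccos_zero, Real.arccos_neg_one])
  · intro hθ
    simp only [Set.mem_insert_iff, Set.mem_singleton_iff] at hθ
    rcases hθ with rfl|rfl
    · refine ⟨v3 1 0 0, by simp [octS], v3 0 1 0, by simp [octS], ?_, ?_⟩
      · rw [Ne, v3_eq_iff]; norm_num
      · rw [inner_v3]; norm_num [Real.arccos_zero]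
    · refine ⟨v3 1 0 0, by simp [octS], v3 (-1) 0 0, by simp [octS], ?_, ?_⟩
      · rw [Ne, v3_eq_iff]; norm_num
      · rw [inner_v3]; norm_num [Real.arccos_neg_one]

lemma angle_cube : angleSet cubeS =
    {Real.arccos (1/3), Real.arccos (-(1/3)), Real.pi} := by
  ext θ
  constructor
  · rintro ⟨b, hb, b', hb', hne, rfl⟩
    simp only [cubeS, Set.mem_insert_iff, Set.mem_singleton_iff] at hb hb'
    simp only [Set.mem_insert_iff, Set.mem_singleton_iff]
    rcases hb with rfl|rfl|rfl|rfl|rfl|rfl|rfl|rfl <;>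
      rcases hb' with rfl|rfl|rfl|rfl|rfl|rfl|rfl|rfl <;>
      first
        | (exact absurd rfl hne)
        | (rw [inner_cubev]; norm_num [Real.arccos_neg_one])
  · intro hθ
    simp only [Set.mem_insert_iff, Set.mem_singleton_iff] at hθ
    rcases hθ with rfl|rfl|rfl
    · refine ⟨cubev 1 1 1, by simp [cubeS], cubev 1 1 (-1), by simp [cubeS], ?_, ?_⟩
      · rw [Ne, cubev_eq_iff]; norm_num
      · rw [inner_cubev]; norm_num
    · refine ⟨cubev 1 1 1, by simp [cubeS], cubev 1 (-1) (-1), by simp [cubeS], ?_, ?_⟩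
      · rw [Ne, cubev_eq_iff]; norm_num
      · rw [inner_cubev]; norm_num
    · refine ⟨cubev 1 1 1, by simp [cubeS], cubev (-1) (-1) (-1), by simp [cubeS], ?_, ?_⟩
      · rw [Ne, cubev_eq_iff]; norm_num
      · rw [inner_cubev]; norm_num [Real.arccos_neg_one]

lemma oct_card : octS.ncard = 6 := by
  have nm : ∀ (a b c : ℝ) (S : Set (EuclideanSpace ℝ (Fin 3))),
      (∀ x ∈ S, ∃ d e f : ℝ, x = v3 d e f ∧ ¬(a = d ∧ b = e ∧ c = f)) →
      v3 a b c ∉ S := by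
    intro a b c S hS hmem
    obtain ⟨d, e, f, hx, hne⟩ := hS _ hmem
    exact hne (v3_eq_iff.mp hx)
  rw [octS,
      Set.ncard_insert_of_notMem (by
        simp only [Set.mem_insert_iff, Set.mem_singleton_iff, v3_eq_iff]
        norm_num) (Set.toFinite _),
      Set.ncard_insert_of_notMem (by
        simp only [Set.mem_insert_iff, Set.mem_singleton_iff, v3_eq_iff]
        norm_num) (Set.toFinite _),
      Set.ncard_insert_of_notMem (by
        simp only [Set.mem_insert_iff, Set.mem_singleton_iff, v3_eq_iff]
        norm_num) (Set.toFinite _),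
      Set.ncard_insert_of_notMem (by
        simp only [Set.mem_insert_iff, Set.mem_singleton_iff, v3_eq_iff]
        norm_num) (Set.toFinite _),
      Set.ncard_insert_of_notMem (by
        simp only [Set.mem_singleton_iff, v3_eq_iff]
        norm_num) (Set.toFinite _),
      Set.ncard_singleton]

lemma cube_card : cubeS.ncard = 8 := by
  rw [cubeS,
      Set.ncard_insert_of_notMem (by
        simp only [Set.mem_insert_iff, Set.mem_singleton_iff, cubev_eq_iff]
        norm_num) (Set.toFinite _),
      Set.ncard_insert_of_notMem (by
        simp only [Set.mem_insert_iff, Set.mem_singleton_iff, cubev_eq_iff]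
        norm_num) (Set.toFinite _),
      Set.ncard_insert_of_notMem (by
        simp only [Set.mem_insert_iff, Set.mem_singleton_iff, cubev_eq_iff]
        norm_num) (Set.toFinite _),
      Set.ncard_insert_of_notMem (by
        simp only [Set.mem_insert_iff, Set.mem_singleton_iff, cubev_eq_iff]
        norm_num) (Set.toFinite _),
      Set.ncard_insert_of_notMem (by
        simp only [Set.mem_insert_iff, Set.mem_singleton_iff, cubev_eq_iff]
        norm_num) (Set.toFinite _),
      Set.ncard_insert_of_notMem (by
        simp only [Set.mem_insert_iff, Set.mem_singleton_iff, cubev_eq_iff]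
        norm_num) (Set.toFinite _),
      Set.ncard_insert_of_notMem (by
        simp only [Set.mem_singleton_iff, cubev_eq_iff]
        norm_num) (Set.toFinite _),
      Set.ncard_singleton]

lemma angle_oct_card : (angleSet octS).ncard = 2 := by
  rw [angle_oct, Set.ncard_pair]
  have := Real.pi_pos
  intro h
  nlinarith [h]

lemma arccos_third_lt : Real.arccos (1/3) < Real.arccos (-(1/3)) :=
  Real.strictAntiOn_arccos (by constructor <;> norm_num) (by constructor <;> norm_num)
    (by norm_num)

lemma arccos_neg_third_lt_pi : Real.arccos (-(1/3)) < Real.pi := by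
  rw [← Real.arccos_neg_one]
  exact Real.strictAntiOn_arccos (by constructor <;> norm_num)
    (by constructor <;> norm_num) (by norm_num)

lemma angle_cube_card : (angleSet cubeS).ncard = 3 := by
  rw [angle_cube]
  rw [Set.ncard_insert_of_notMem (by
        simp only [Set.mem_insert_iff, Set.mem_singleton_iff]
        push_neg
        exact ⟨ne_of_lt arccos_third_lt,
          ne_of_lt (arccos_third_lt.trans arccos_neg_third_lt_pi)⟩) (Set.toFinite _),
      Set.ncard_pair (ne_of_lt arccos_neg_third_lt_pi)]


lemma Ecoeff_ne : Ecoeff octS ≠ Ecoeff cubeS := by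
  unfold Ecoeff
  rw [oct_card, cube_card, angle_oct_card, angle_cube_card]
  have h1 : Nat.choose 6 2 = 15 := by decide
  have h2 : Nat.choose 8 2 = 28 := by decide
  rw [h1, h2]
  push_cast
  rw [← Real.logb_div (by norm_num) (by norm_num),
      ← Real.logb_div (by norm_num) (by norm_num)]
  exact ne_of_lt (Real.logb_lt_logb (by norm_num) (by norm_num) (by norm_num))

lemma norm_v3 (a b c : ℝ) : ‖v3 a b c‖ = Real.sqrt (a^2 + b^2 + c^2) := by
  rw [EuclideanSpace.norm_eq]
  simp [v3, Fin.sum_univ_three, Real.norm_eq_abs, sq_abs]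

lemma norm_oct : ∀ v ∈ octS, ‖v‖ = 1 := by
  intro v hv
  simp only [octS, Set.mem_insert_iff, Set.mem_singleton_iff] at hv
  rcases hv with rfl|rfl|rfl|rfl|rfl|rfl <;>
    · rw [norm_v3]; norm_num

lemma norm_cube : ∀ v ∈ cubeS, ‖v‖ = 1 := by
  have key : ∀ a b c : ℝ, a^2 = 1 → b^2 = 1 → c^2 = 1 → ‖cubev a b c‖ = 1 := by
    intro a b c ha hb hc
    rw [cubev_eq_v3, norm_v3, mul_pow, mul_pow, mul_pow, ha, hb, hc, inv_pow,
        Real.sq_sqrt (by norm_num : (0:ℝ) ≤ 3)]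
    norm_num [Real.sqrt_one]
  intro v hv
  simp only [cubeS, Set.mem_insert_iff, Set.mem_singleton_iff] at hv
  rcases hv with rfl|rfl|rfl|rfl|rfl|rfl|rfl|rfl <;>
    exact key _ _ _ (by norm_num) (by norm_num) (by norm_num)

lemma oct_ne_cube : octS ≠ cubeS := by
  intro h
  have hm : v3 1 0 0 ∈ cubeS := h ▸ (by simp [octS] : v3 1 0 0 ∈ octS)
  have hinv : (Real.sqrt 3)⁻¹ ≠ 0 := inv_ne_zero sqrt3_ne
  simp only [cubeS, Set.mem_insert_iff, Set.mem_singleton_iff] at hm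
  rcases hm with h'|h'|h'|h'|h'|h'|h'|h' <;>
    · rw [cubev_eq_v3, v3_eq_iff] at h'
      exact hinv (by linarith [h'.2.1])

lemma oct_fin : octS.Finite := by rw [octS]; exact Set.toFinite _
lemma cube_fin : cubeS.Finite := by rw [cubeS]; exact Set.toFinite _

/-- There exist distinct finite subsets of the unit sphere in ℝ³ — the octahedral and
cube-diagonal bond sets — with equal point groups but different extracopularity
coefficients: `E` distinguishes geometries that point symmetry cannot. -/
theorem E_distinguishes_equal_point_groups :
    octS ≠ cubeS ∧ octS.Finite ∧ cubeS.Finite ∧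
    (∀ v ∈ octS, ‖v‖ = 1) ∧ (∀ v ∈ cubeS, ‖v‖ = 1) ∧
    pointGroup octS = pointGroup cubeS ∧
    Ecoeff octS ≠ Ecoeff cubeS := by
  exact ⟨oct_ne_cube, oct_fin, cube_fin, norm_oct, norm_cube, pg_eq, Ecoeff_ne⟩
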